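/- arXiv:1704.00353 — 2 statements merged into one kernel-verified Lean document; each statement's English description precedes it below -/
import Mathlib

section
/- Let γ: [a,b] → U be a curve in an open set U ⊆ ℝ^{d+1} that is Lipschitz and causal for a continuous Lorentzian metric g on U admitting a C^0 time function x^0 (i.e. the coordinate function x^0 has past-directed timelike gradient with |∇x^0|_g ≥ m > 0 on U). Then the g-length of γ satisfies L_g(γ) ≤ (√2/m)(x^0(γ(b)) − x^0(γ(a))). In particular, by shrinking U, the g-length of every causal curve contained in U can be made smaller than any prescribed ε > 0. -/
open MeasureTheory Set Filter

noncomputable section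

/-- The value of the (matrix-valued) metric field `g` at `x`, as a quadratic form on `v`. -/
def quadForm {n : ℕ} (g : (Fin n → ℝ) → Matrix (Fin n) (Fin n) ℝ)
    (x v : Fin n → ℝ) : ℝ :=
  ∑ μ, ∑ ν, g x μ ν * v μ * v ν

/-- The metric `g` at `x`, as a bilinear form on `v, w`. -/
def bilinForm {n : ℕ} (g : (Fin n → ℝ) → Matrix (Fin n) (Fin n) ℝ)
    (x v w : Fin n → ℝ) : ℝ :=
  ∑ μ, ∑ ν, g x μ ν * v μ * w ν

/-- The components of `g` are continuous on `U`. -/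
def ContinuousMetricOn {n : ℕ} (g : (Fin n → ℝ) → Matrix (Fin n) (Fin n) ℝ)
    (U : Set (Fin n → ℝ)) : Prop :=
  ∀ μ ν, ContinuousOn (fun x => g x μ ν) U

/-- `g` is a symmetric Lorentzian metric of signature `(-,+,…,+)` on `U`:
at each point there is a timelike vector whose `g`-orthogonal complement is
positive definite. -/
def IsLorentzOn {n : ℕ} (g : (Fin n → ℝ) → Matrix (Fin n) (Fin n) ℝ)
    (U : Set (Fin n → ℝ)) : Prop :=
  ∀ x ∈ U, (∀ μ ν, g x μ ν = g x ν μ) ∧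
    ∃ T : Fin n → ℝ, quadForm g x T < 0 ∧
      ∀ v : Fin n → ℝ, v ≠ 0 → bilinForm g x T v = 0 → 0 < quadForm g x v

/-- `T` is a continuous timelike vector field on `U` (a time orientation). -/
def TimeOrientationOn {n : ℕ} (g : (Fin n → ℝ) → Matrix (Fin n) (Fin n) ℝ)
    (T : (Fin n → ℝ) → Fin n → ℝ) (U : Set (Fin n → ℝ)) : Prop :=
  (∀ i, ContinuousOn (fun x => T x i) U) ∧ ∀ x ∈ U, quadForm g x (T x) < 0

/-- Lorentzian length of the curve `γ` on `[a,b]`. -/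
def clen {n : ℕ} (g : (Fin n → ℝ) → Matrix (Fin n) (Fin n) ℝ)
    (γ : ℝ → Fin n → ℝ) (a b : ℝ) : ℝ :=
  ∫ t in a..b, Real.sqrt (-(quadForm g (γ t) (deriv γ t)))

/-- `γ : [a,b] → ℝⁿ` is a future directed causal Lipschitz curve for `g`, the
time orientation being given by the (future directed) timelike field `T`. -/
def FutureCausalOn {n : ℕ} (g : (Fin n → ℝ) → Matrix (Fin n) (Fin n) ℝ)
    (T : (Fin n → ℝ) → Fin n → ℝ) (γ : ℝ → Fin n → ℝ) (a b : ℝ) : Prop :=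
  (∃ K, LipschitzOnWith K γ (Icc a b)) ∧
  ∀ᵐ t : ℝ, t ∈ Ioo a b →
    quadForm g (γ t) (deriv γ t) ≤ 0 ∧ deriv γ t ≠ 0 ∧
      bilinForm g (γ t) (T (γ t)) (deriv γ t) < 0

/-- `γ : [a,b] → ℝⁿ` is a future directed timelike Lipschitz curve for `g`. -/
def FutureTimelikeOn {n : ℕ} (g : (Fin n → ℝ) → Matrix (Fin n) (Fin n) ℝ)
    (T : (Fin n → ℝ) → Fin n → ℝ) (γ : ℝ → Fin n → ℝ) (a b : ℝ) : Prop :=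
  (∃ K, LipschitzOnWith K γ (Icc a b)) ∧
  ∀ᵐ t : ℝ, t ∈ Ioo a b →
    quadForm g (γ t) (deriv γ t) < 0 ∧
      bilinForm g (γ t) (T (γ t)) (deriv γ t) < 0

/-- The causal relation on the subset `M`: `q` is in the causal future of `p`. -/
def CausalRel {n : ℕ} (g : (Fin n → ℝ) → Matrix (Fin n) (Fin n) ℝ)
    (T : (Fin n → ℝ) → Fin n → ℝ) (M : Set (Fin n → ℝ)) (p q : Fin n → ℝ) : Prop :=
  p = q ∨ ∃ γ a b, a < b ∧ FutureCausalOn g T γ a b ∧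
    MapsTo γ (Icc a b) M ∧ γ a = p ∧ γ b = q

/-- The chronological relation on the subset `M`. -/
def ChronRel {n : ℕ} (g : (Fin n → ℝ) → Matrix (Fin n) (Fin n) ℝ)
    (T : (Fin n → ℝ) → Fin n → ℝ) (M : Set (Fin n → ℝ)) (p q : Fin n → ℝ) : Prop :=
  ∃ γ a b, a < b ∧ FutureTimelikeOn g T γ a b ∧
    MapsTo γ (Icc a b) M ∧ γ a = p ∧ γ b = q

/-- The causal future `J⁺(p, M)`. -/
def JPlus {n : ℕ} (g : (Fin n → ℝ) → Matrix (Fin n) (Fin n) ℝ)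
    (T : (Fin n → ℝ) → Fin n → ℝ) (M : Set (Fin n → ℝ)) (p : Fin n → ℝ) :
    Set (Fin n → ℝ) :=
  {q | CausalRel g T M p q}

/-- The causal past `J⁻(q, M)`. -/
def JMinus {n : ℕ} (g : (Fin n → ℝ) → Matrix (Fin n) (Fin n) ℝ)
    (T : (Fin n → ℝ) → Fin n → ℝ) (M : Set (Fin n → ℝ)) (q : Fin n → ℝ) :
    Set (Fin n → ℝ) :=
  {p | CausalRel g T M p q}

/-- The chronological future `I⁺(p, M)`. -/
def IPlus {n : ℕ} (g : (Fin n → ℝ) → Matrix (Fin n) (Fin n) ℝ)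
    (T : (Fin n → ℝ) → Fin n → ℝ) (M : Set (Fin n → ℝ)) (p : Fin n → ℝ) :
    Set (Fin n → ℝ) :=
  {q | ChronRel g T M p q}

/-- The chronological past `I⁻(q, M)`. -/
def IMinus {n : ℕ} (g : (Fin n → ℝ) → Matrix (Fin n) (Fin n) ℝ)
    (T : (Fin n → ℝ) → Fin n → ℝ) (M : Set (Fin n → ℝ)) (q : Fin n → ℝ) :
    Set (Fin n → ℝ) :=
  {p | ChronRel g T M p q}

/-- `W` is causally convex in `M`: no causal curve of `M` meets `W` in a
disconnected set. -/
def CausallyConvex {n : ℕ} (g : (Fin n → ℝ) → Matrix (Fin n) (Fin n) ℝ)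
    (T : (Fin n → ℝ) → Fin n → ℝ) (M W : Set (Fin n → ℝ)) : Prop :=
  ∀ γ a b, a ≤ b → FutureCausalOn g T γ a b → MapsTo γ (Icc a b) M →
    γ a ∈ W → γ b ∈ W → MapsTo γ (Icc a b) W

/-- Strong causality of `(M, g)`. -/
def StronglyCausalOn {n : ℕ} (g : (Fin n → ℝ) → Matrix (Fin n) (Fin n) ℝ)
    (T : (Fin n → ℝ) → Fin n → ℝ) (M : Set (Fin n → ℝ)) : Prop :=
  ∀ p ∈ M, ∀ U, IsOpen U → p ∈ U → U ⊆ M →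
    ∃ W, IsOpen W ∧ p ∈ W ∧ W ⊆ U ∧ CausallyConvex g T M W

/-- Global hyperbolicity: strong causality plus compact causal diamonds. -/
def GloballyHyperbolicOn {n : ℕ} (g : (Fin n → ℝ) → Matrix (Fin n) (Fin n) ℝ)
    (T : (Fin n → ℝ) → Fin n → ℝ) (M : Set (Fin n → ℝ)) : Prop :=
  StronglyCausalOn g T M ∧
    ∀ p ∈ M, ∀ q ∈ M, IsCompact (JPlus g T M p ∩ JMinus g T M q)


section Aux
open Topology intervalIntegral

lemma slope_seq {F : ℝ → ℝ} {t L : ℝ} (h : HasDerivAt F L t) {c : ℕ → ℝ}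
    (hc : ∀ n, 0 < c n) (hc0 : Tendsto c atTop (𝓝 0)) :
    Tendsto (fun n => (F (t + c n) - F t) / c n) atTop (𝓝 L) := by
  have hs := hasDerivAt_iff_tendsto_slope.mp h
  have hseq : Tendsto (fun n => t + c n) atTop (𝓝[≠] t) := by
    rw [tendsto_nhdsWithin_iff]
    constructor
    · have := tendsto_const_nhds (x := t) (f := atTop (α := ℕ)) |>.add hc0
      simpa using this
    · exact Eventually.of_forall fun n => by
        simp [ne_of_gt (hc n)]
  have := hs.comp hseq
  convert this using 2 with n
  simp [slope, Function.comp]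
  ring

lemma lip_ftc {K : NNReal} {F : ℝ → ℝ} (hF : LipschitzWith K F) (a b : ℝ) :
    ∫ t in a..b, deriv F t = F b - F a := by
  have hcont : Continuous F := hF.continuous
  set c : ℕ → ℝ := fun n => 1 / (n + 1) with hcdef
  have hc : ∀ n, 0 < c n := fun n => by positivity
  have hc0 : Tendsto c atTop (𝓝 0) := tendsto_one_div_add_atTop_nhds_zero_nat
  set G : ℕ → ℝ → ℝ := fun n t => (F (t + c n) - F t) / c n with hGdef
  -- DCT
  have hDCT : Tendsto (fun n => ∫ t in a..b, G n t) atTop (𝓝 (∫ t in a..b, deriv F t)) := by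
    apply intervalIntegral.tendsto_integral_filter_of_dominated_convergence (fun _ => (K : ℝ))
    · exact Eventually.of_forall fun n =>
        (Continuous.aestronglyMeasurable (by continuity)).restrict
    · refine Eventually.of_forall fun n => Eventually.of_forall fun t _ => ?_
      have h1 : |F (t + c n) - F t| ≤ K * |c n| := by
        have := hF.dist_le_mul (t + c n) t
        simpa [Real.dist_eq, abs_of_pos (hc n)] using this
      rw [Real.norm_eq_abs, hGdef, abs_div]
      rw [div_le_iff₀ (by positivity)]
      simpa [abs_of_pos (hc n)] using h1
    · exact intervalIntegrable_const
    · filter_upwards [hF.ae_differentiableAt_real] with t ht _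
      exact slope_seq ht.hasDerivAt hc hc0
  -- explicit limit
  have hint : ∀ u v : ℝ, IntervalIntegrable F volume u v := fun u v =>
    hcont.intervalIntegrable u v
  have hval : ∀ n, ∫ t in a..b, G n t
      = ((∫ t in b..(b + c n), F t) - ∫ t in a..(a + c n), F t) / c n := by
    intro n
    have h1 : ∫ t in a..b, G n t = ((∫ t in a..b, F (t + c n)) - ∫ t in a..b, F t) / c n := by
      rw [← intervalIntegral.integral_sub (by
          exact (hcont.comp (continuous_id.add continuous_const) : Continuous fun t => F (t + c n)).intervalIntegrable a b)
        (hint a b), ← intervalIntegral.integral_div]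
    rw [h1, intervalIntegral.integral_comp_add_right]
    have e1 : (∫ t in a..(a + c n), F t) + ∫ t in (a + c n)..(b + c n), F t
        = ∫ t in a..(b + c n), F t := integral_add_adjacent_intervals (hint _ _) (hint _ _)
    have e2 : (∫ t in a..b, F t) + ∫ t in b..(b + c n), F t
        = ∫ t in a..(b + c n), F t := integral_add_adjacent_intervals (hint _ _) (hint _ _)
    congr 1
    linarith [e1, e2]
  have hder : ∀ x : ℝ, Tendsto (fun n => (∫ t in x..(x + c n), F t) / c n) atTop (𝓝 (F x)) := by
    intro x
    have hH : HasDerivAt (fun u => ∫ t in x..u, F t) (F x) x :=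
      integral_hasDerivAt_right (hint x x) (hcont.stronglyMeasurable.stronglyMeasurableAtFilter)
        hcont.continuousAt
    have := slope_seq hH hc hc0
    simpa using this
  have hlim2 : Tendsto (fun n => ∫ t in a..b, G n t) atTop (𝓝 (F b - F a)) := by
    have := (hder b).sub (hder a)
    refine this.congr fun n => ?_
    rw [hval n]
    ring
  exact tendsto_nhds_unique hDCT hlim2

section algebra0
variable {n : ℕ} {g : (Fin n → ℝ) → Matrix (Fin n) (Fin n) ℝ} {x : Fin n → ℝ}

lemma quad_zero : quadForm (g := g) (x := x) 0 = 0 := by simp [quadForm]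

lemma quad_eq_bilin (v : Fin n → ℝ) : quadForm g x v = bilinForm g x v v := rfl

lemma bilin_swap (hsym : ∀ μ ν, g x μ ν = g x ν μ) (v u : Fin n → ℝ) :
    bilinForm g x v u = bilinForm g x u v := by
  unfold bilinForm
  rw [Finset.sum_comm]
  refine Finset.sum_congr rfl fun μ _ => Finset.sum_congr rfl fun ν _ => ?_
  rw [hsym ν μ]; ring

lemma bilin_add_right (v u u' : Fin n → ℝ) :
    bilinForm g x v (u + u') = bilinForm g x v u + bilinForm g x v u' := by
  unfold bilinForm
  rw [← Finset.sum_add_distrib]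
  refine Finset.sum_congr rfl fun μ _ => ?_
  rw [← Finset.sum_add_distrib]
  refine Finset.sum_congr rfl fun ν _ => ?_
  simp [Pi.add_apply]; ring

lemma bilin_smul_right (c : ℝ) (v u : Fin n → ℝ) :
    bilinForm g x v (c • u) = c * bilinForm g x v u := by
  unfold bilinForm
  rw [Finset.mul_sum]
  refine Finset.sum_congr rfl fun μ _ => ?_
  rw [Finset.mul_sum]
  refine Finset.sum_congr rfl fun ν _ => ?_
  simp [Pi.smul_apply, smul_eq_mul]; ring

lemma bilin_add_left (v v' u : Fin n → ℝ) :
    bilinForm g x (v + v') u = bilinForm g x v u + bilinForm g x v' u := by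
  unfold bilinForm
  rw [← Finset.sum_add_distrib]
  refine Finset.sum_congr rfl fun μ _ => ?_
  rw [← Finset.sum_add_distrib]
  refine Finset.sum_congr rfl fun ν _ => ?_
  simp [Pi.add_apply]; ring

lemma bilin_smul_left (c : ℝ) (v u : Fin n → ℝ) :
    bilinForm g x (c • v) u = c * bilinForm g x v u := by
  unfold bilinForm
  rw [Finset.mul_sum]
  refine Finset.sum_congr rfl fun μ _ => ?_
  rw [Finset.mul_sum]
  refine Finset.sum_congr rfl fun ν _ => ?_
  simp [Pi.smul_apply, smul_eq_mul]; ring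

lemma bilin_neg_left (v u : Fin n → ℝ) :
    bilinForm g x (-v) u = -bilinForm g x v u := by
  have := bilin_smul_left (g := g) (x := x) (-1) v u
  simpa using this

lemma quad_add_smul (u w : Fin n → ℝ) (c : ℝ) :
    quadForm g x (u + c • w)
      = quadForm g x u + c * (bilinForm g x u w + bilinForm g x w u)
        + c ^ 2 * quadForm g x w := by
  rw [quad_eq_bilin, bilin_add_left, bilin_add_right, bilin_add_right,
    bilin_smul_left, bilin_smul_right, bilin_smul_left, bilin_smul_right,
    ← quad_eq_bilin, ← quad_eq_bilin]
  ring

/-- Orthogonal complement of a timelike vector is positive definite. -/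
lemma ortho_pos (hsym : ∀ μ ν, g x μ ν = g x ν μ) (T : Fin n → ℝ)
    (hT : quadForm g x T < 0)
    (hpos : ∀ v : Fin n → ℝ, v ≠ 0 → bilinForm g x T v = 0 → 0 < quadForm g x v)
    (w : Fin n → ℝ) (hw : quadForm g x w < 0) :
    ∀ u : Fin n → ℝ, u ≠ 0 → bilinForm g x w u = 0 → 0 < quadForm g x u := by
  intro u hu h0
  -- nonneg on T-orthocomplement
  have hnn : ∀ v : Fin n → ℝ, bilinForm g x T v = 0 → 0 ≤ quadForm g x v := by
    intro v hv
    rcases eq_or_ne v 0 with rfl | hvne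
    · simp [quad_zero]
    · exact le_of_lt (hpos v hvne hv)
  set aa : ℝ := bilinForm g x T w / quadForm g x T with ha
  set s : Fin n → ℝ := w + (-aa) • T with hs
  set bb : ℝ := bilinForm g x T u / quadForm g x T with hb
  set r : Fin n → ℝ := u + (-bb) • T with hr
  have hTs : bilinForm g x T s = 0 := by
    rw [hs, bilin_add_right, bilin_smul_right, ← quad_eq_bilin, ha]
    field_simp [ne_of_lt hT]
    ring
  have hTr : bilinForm g x T r = 0 := by
    rw [hr, bilin_add_right, bilin_smul_right, ← quad_eq_bilin, hb]
    field_simp [ne_of_lt hT]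
    ring
  have hsT : bilinForm g x s T = 0 := by rw [bilin_swap hsym]; exact hTs
  have hrT : bilinForm g x r T = 0 := by rw [bilin_swap hsym]; exact hTr
  -- w = aa • T + s, u = bb • T + r
  have hwrep : w = s + aa • T := by rw [hs]; ext i; simp
  have hurep : u = r + bb • T := by rw [hr]; ext i; simp
  have hQw : quadForm g x w = quadForm g x s + aa ^ 2 * quadForm g x T := by
    rw [hwrep, quad_add_smul]
    rw [hsT, bilin_swap hsym T s, hsT]
    ring
  have hQu : quadForm g x u = quadForm g x r + bb ^ 2 * quadForm g x T := by
    rw [hurep, quad_add_smul]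
    rw [hrT, bilin_swap hsym T r, hrT]
    ring
  have hQs : 0 ≤ quadForm g x s := hnn s hTs
  have hQr : 0 ≤ quadForm g x r := hnn r hTr
  have haa : aa ^ 2 * (-quadForm g x T) > quadForm g x s := by nlinarith [hQw, hw]
  have haane : aa ≠ 0 := by
    intro h
    rw [h] at haa
    nlinarith
  -- orthogonality relation
  have hwu : bilinForm g x s r = -(aa * bb * quadForm g x T) := by
    have h1 : bilinForm g x w u = bilinForm g x s r + aa * bb * quadForm g x T := by
      rw [hwrep, hurep]
      simp only [bilin_add_left, bilin_add_right, bilin_smul_left, bilin_smul_right]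
      rw [hsT, hTr, ← quad_eq_bilin]
      ring
    rw [h0] at h1
    linarith
  -- Cauchy-Schwarz on the T-orthocomplement
  have hCS : (bilinForm g x s r) ^ 2 ≤ quadForm g x s * quadForm g x r := by
    have key : ∀ t : ℝ, 0 ≤ quadForm g x r * (t * t) + (2 * bilinForm g x s r) * t
        + quadForm g x s := by
      intro t
      have h1 : bilinForm g x T (s + t • r) = 0 := by
        rw [bilin_add_right, bilin_smul_right, hTs, hTr]; ring
      have h2 := hnn _ h1
      rw [quad_add_smul] at h2
      rw [bilin_swap hsym r s] at h2
      nlinarith [h2]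
    have hd := discrim_le_zero key
    rw [discrim] at hd
    nlinarith [hd]
  rcases eq_or_lt_of_le hQr with hQr0 | hQrpos
  · -- Q r = 0 forces r = 0 then u = bb • T with contradiction chain
    have hr0 : r = 0 := by
      by_contra hrne
      exact absurd (hpos r hrne hTr) (by rw [← hQr0]; simp)
    have hsr0 : bilinForm g x s r = 0 := by
      rw [hr0]
      have := bilin_smul_right (g := g) (x := x) 0 s 0
      simpa using this
    have hbb : bb = 0 := by
      rw [hsr0] at hwu
      rcases mul_eq_zero.mp (by linarith : aa * bb * quadForm g x T = 0) with h | h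
      · rcases mul_eq_zero.mp h with h' | h'
        · exact absurd h' haane
        · exact h'
      · exact absurd h (ne_of_lt hT)
    exfalso
    apply hu
    rw [hurep, hr0, hbb]
    simp
  · -- Q r > 0
    have hineq : (aa * bb * quadForm g x T) ^ 2 < quadForm g x r * (aa ^ 2 * (-quadForm g x T)) := by
      calc (aa * bb * quadForm g x T) ^ 2 = (bilinForm g x s r) ^ 2 := by rw [hwu]; ring
      _ ≤ quadForm g x s * quadForm g x r := hCS
      _ < quadForm g x r * (aa ^ 2 * (-quadForm g x T)) := by nlinarith [haa, hQrpos]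
    have : bb ^ 2 * (-quadForm g x T) < quadForm g x r := by
      have haa2 : 0 < aa ^ 2 := by positivity
      nlinarith [hineq]
    rw [hQu]
    nlinarith

/-- Reverse Cauchy-Schwarz. -/
lemma revCS (hsym : ∀ μ ν, g x μ ν = g x ν μ) (T : Fin n → ℝ)
    (hT : quadForm g x T < 0)
    (hpos : ∀ v : Fin n → ℝ, v ≠ 0 → bilinForm g x T v = 0 → 0 < quadForm g x v)
    (w : Fin n → ℝ) (hw : quadForm g x w < 0)
    (v : Fin n → ℝ) (hv : quadForm g x v ≤ 0) :
    quadForm g x v * quadForm g x w ≤ (bilinForm g x w v) ^ 2 := by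
  set α : ℝ := bilinForm g x w v / quadForm g x w with hα
  set u : Fin n → ℝ := v + (-α) • w with hu
  have hwu : bilinForm g x w u = 0 := by
    rw [hu, bilin_add_right, bilin_smul_right, ← quad_eq_bilin, hα]
    field_simp [ne_of_lt hw]
    ring
  have hvrep : v = u + α • w := by rw [hu]; ext i; simp
  have hQv : quadForm g x v = quadForm g x u + α ^ 2 * quadForm g x w := by
    rw [hvrep, quad_add_smul, bilin_swap hsym u w, hwu]
    ring
  have hB : bilinForm g x w v = α * quadForm g x w := by
    rw [hα, div_mul_cancel₀ _ (ne_of_lt hw)]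
  rcases eq_or_ne u 0 with hu0 | hune
  · have hQu0 : quadForm g x u = 0 := by
      rw [hu0]
      simp [quadForm]
    rw [hQv, hQu0, hB]; ring_nf; nlinarith [sq_nonneg (α * quadForm g x w)]
  · have hQu : 0 < quadForm g x u := ortho_pos hsym T hT hpos w hw u hune hwu
    rw [hQv, hB]
    nlinarith [hQu, hw]

end algebra0

/-- Pointwise estimate: for causal `v` with positive `w`-pairing,
`√(-Q v) ≤ (√2 / m) * B w v`. -/
lemma pointwise_est {n : ℕ} {g : (Fin n → ℝ) → Matrix (Fin n) (Fin n) ℝ} {x : Fin n → ℝ}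
    (hsym : ∀ μ ν, g x μ ν = g x ν μ)
    (T : Fin n → ℝ) (hT : quadForm g x T < 0)
    (hpos : ∀ v : Fin n → ℝ, v ≠ 0 → bilinForm g x T v = 0 → 0 < quadForm g x v)
    (w : Fin n → ℝ) (hw : quadForm g x w < 0)
    {m : ℝ} (hm : 0 < m) (hmlow : m ≤ Real.sqrt (-(quadForm g x w)))
    (v : Fin n → ℝ) (hv : quadForm g x v ≤ 0) (hB : 0 < bilinForm g x w v) :
    Real.sqrt (-(quadForm g x v)) ≤ (Real.sqrt 2 / m) * bilinForm g x w v := by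
  have hCS := revCS hsym T hT hpos w hw v hv
  have hm2 : m ^ 2 ≤ -(quadForm g x w) := by
    have h0 : 0 ≤ -(quadForm g x w) := by linarith
    nlinarith [Real.sq_sqrt h0, Real.sqrt_nonneg (-(quadForm g x w))]
  have key : -(quadForm g x v) ≤ (bilinForm g x w v / m) ^ 2 := by
    have h2 : (-(quadForm g x v)) * m ^ 2 ≤ (bilinForm g x w v) ^ 2 := by nlinarith
    rw [div_pow, le_div_iff₀ (by positivity)]
    linarith
  calc Real.sqrt (-(quadForm g x v))
      ≤ Real.sqrt ((bilinForm g x w v / m) ^ 2) := Real.sqrt_le_sqrt key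
    _ = bilinForm g x w v / m := Real.sqrt_sq (by positivity)
    _ ≤ (Real.sqrt 2 / m) * bilinForm g x w v := by
        have h2 : (1 : ℝ) ≤ Real.sqrt 2 := by
          nlinarith [Real.sq_sqrt (by norm_num : (0:ℝ) ≤ 2), Real.sqrt_nonneg 2]
        rw [div_mul_eq_mul_div]
        gcongr
        nlinarith

end Aux

/-- length estimate via a time function `x⁰` with past timelike
gradient `w` of `g`-norm at least `m`, for causal curves in `U ⊆ ℝ^{d+1}`;
and, in particular, after shrinking `U` the length of any causal curve can be
made smaller than any prescribed `ε`. The time orientation is given by `-w`. -/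
theorem stmt0 (d : ℕ) (U : Set (Fin (d + 1) → ℝ)) (hU : IsOpen U)
    (g : (Fin (d + 1) → ℝ) → Matrix (Fin (d + 1)) (Fin (d + 1)) ℝ)
    (hgc : ContinuousMetricOn g U) (hLor : IsLorentzOn g U)
    (w : (Fin (d + 1) → ℝ) → Fin (d + 1) → ℝ)
    (hgrad : ∀ x ∈ U, ∀ v : Fin (d + 1) → ℝ, bilinForm g x (w x) v = v 0)
    (hpast : ∀ x ∈ U, quadForm g x (w x) < 0)
    (m : ℝ) (hm : 0 < m)
    (hmlow : ∀ x ∈ U, m ≤ Real.sqrt (-(quadForm g x (w x)))) :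
    (∀ (γ : ℝ → Fin (d + 1) → ℝ) (a b : ℝ), a ≤ b →
        MapsTo γ (Icc a b) U → FutureCausalOn g (fun x => -(w x)) γ a b →
        clen g γ a b ≤ (Real.sqrt 2 / m) * (γ b 0 - γ a 0)) ∧
    (∀ ε > (0 : ℝ), ∀ p ∈ U, ∃ U', U' ⊆ U ∧ IsOpen U' ∧ p ∈ U' ∧
        ∀ (γ : ℝ → Fin (d + 1) → ℝ) (a b : ℝ), a ≤ b →
          MapsTo γ (Icc a b) U' → FutureCausalOn g (fun x => -(w x)) γ a b →
          clen g γ a b < ε) := by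
  have main : ∀ (γ : ℝ → Fin (d + 1) → ℝ) (a b : ℝ), a ≤ b →
      MapsTo γ (Icc a b) U → FutureCausalOn g (fun x => -(w x)) γ a b →
      clen g γ a b ≤ (Real.sqrt 2 / m) * (γ b 0 - γ a 0) := by
    intro γ a b hab hmap hcaus
    obtain ⟨⟨K, hK⟩, hae⟩ := hcaus
    have hlip : LipschitzOnWith K (fun t => γ t 0) (Icc a b) := by
      have he : LipschitzWith 1 (Function.eval (0 : Fin (d + 1)) :
          (Fin (d + 1) → ℝ) → ℝ) := LipschitzWith.eval 0
      have := he.comp_lipschitzOnWith hK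
      rw [one_mul] at this
      exact this
    obtain ⟨F, hFlip, hFeq⟩ := hlip.extend_real
    have hFa : F a = γ a 0 := (hFeq (left_mem_Icc.mpr hab)).symm
    have hFb : F b = γ b 0 := (hFeq (right_mem_Icc.mpr hab)).symm
    set h : ℝ → ℝ := fun t => Real.sqrt (-(quadForm g (γ t) (deriv γ t))) with hh
    have haeIoo : ∀ᵐ t : ℝ, t ∈ Ioo a b →
        h t ≤ (Real.sqrt 2 / m) * deriv F t ∧ 0 ≤ deriv F t := by
      filter_upwards [hae] with t hct hIoo
      obtain ⟨hQ, hne, hB⟩ := hct hIoo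
      have hdiff : DifferentiableAt ℝ γ t := by
        by_contra hnd
        exact hne (deriv_zero_of_not_differentiableAt hnd)
      have h1 : HasDerivAt (fun s => γ s 0) (deriv γ t 0) t :=
        hasDerivAt_pi.mp hdiff.hasDerivAt 0
      have h2 : F =ᶠ[nhds t] fun s => γ s 0 := by
        filter_upwards [Ioo_mem_nhds hIoo.1 hIoo.2] with s hs
        exact (hFeq (Ioo_subset_Icc_self hs)).symm
      have hdF : deriv F t = deriv γ t 0 := by rw [h2.deriv_eq, h1.deriv]
      have hxU : γ t ∈ U := hmap (Ioo_subset_Icc_self hIoo)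
      obtain ⟨hsym, T, hT, hposT⟩ := hLor _ hxU
      have hBw : bilinForm g (γ t) (w (γ t)) (deriv γ t) = deriv γ t 0 := hgrad _ hxU _
      have hBpos : 0 < bilinForm g (γ t) (w (γ t)) (deriv γ t) := by
        have hneg := bilin_neg_left (g := g) (x := γ t) (w (γ t)) (deriv γ t)
        rw [hneg] at hB
        linarith
      have hest := pointwise_est hsym T hT hposT (w (γ t)) (hpast _ hxU) hm
        (hmlow _ hxU) (deriv γ t) hQ hBpos
      rw [hBw] at hest
      rw [hdF]
      exact ⟨hest, by linarith [hBw ▸ hBpos]⟩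
    have hane : ∀ᵐ t : ℝ, t ≠ a := by
      refine ae_iff.mpr ?_
      simp only [ne_eq, not_not, setOf_eq_eq_singleton, Real.volume_singleton]
    have hbne : ∀ᵐ t : ℝ, t ≠ b := by
      refine ae_iff.mpr ?_
      simp only [ne_eq, not_not, setOf_eq_eq_singleton, Real.volume_singleton]
    have hIooae : ∀ᵐ t ∂(volume.restrict (Icc a b)), t ∈ Ioo a b := by
      filter_upwards [ae_restrict_mem measurableSet_Icc,
        ae_restrict_of_ae (hane.and hbne)] with t ht hne
      exact ⟨lt_of_le_of_ne ht.1 hne.1.symm, lt_of_le_of_ne ht.2 hne.2⟩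
    have hres : ∀ᵐ t ∂(volume.restrict (Icc a b)),
        h t ≤ (Real.sqrt 2 / m) * deriv F t ∧ 0 ≤ deriv F t := by
      filter_upwards [ae_restrict_of_ae haeIoo, hIooae] with t hP ht
      exact hP ht
    have hFTC : ∫ t in a..b, deriv F t = F b - F a := lip_ftc hFlip a b
    have hderint : IntervalIntegrable (deriv F) volume a b := by
      refine IntervalIntegrable.mono_fun' (g := fun _ => (K : ℝ))
        intervalIntegrable_const ?_ ?_
      · exact (measurable_deriv F).aestronglyMeasurable.restrict
      · exact ae_of_all _ fun t => norm_deriv_le_of_lipschitz hFlip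
    have hφint : IntervalIntegrable (fun t => (Real.sqrt 2 / m) * deriv F t) volume a b :=
      hderint.const_mul _
    have hnnint : 0 ≤ ∫ t in a..b, deriv F t :=
      intervalIntegral.integral_nonneg_of_ae_restrict hab (hres.mono fun t ht => ht.2)
    by_cases hInt : IntervalIntegrable h volume a b
    · have hmono := intervalIntegral.integral_mono_ae_restrict hab hInt hφint
        (hres.mono fun t ht => ht.1)
      calc clen g γ a b = ∫ t in a..b, h t := rfl
        _ ≤ ∫ t in a..b, (Real.sqrt 2 / m) * deriv F t := hmono
        _ = (Real.sqrt 2 / m) * ∫ t in a..b, deriv F t := by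
            rw [intervalIntegral.integral_const_mul]
        _ = (Real.sqrt 2 / m) * (γ b 0 - γ a 0) := by rw [hFTC, hFa, hFb]
    · have h0 : clen g γ a b = 0 := intervalIntegral.integral_undef hInt
      rw [h0]
      have hnn : 0 ≤ F b - F a := hFTC ▸ hnnint
      have hc : 0 ≤ Real.sqrt 2 / m := by positivity
      rw [← hFa, ← hFb]
      exact mul_nonneg hc hnn
  refine ⟨main, ?_⟩
  intro ε hε p hp
  refine ⟨U ∩ {x | |x 0 - p 0| < m * ε / 4}, inter_subset_left, ?_, ?_, ?_⟩
  · refine hU.inter (isOpen_lt ?_ continuous_const)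
    exact ((continuous_apply (0 : Fin (d + 1))).sub continuous_const).abs
  · refine ⟨hp, ?_⟩
    simp only [mem_setOf_eq, sub_self, abs_zero]
    positivity
  · intro γ a b hab hmap hcaus
    have h1 := main γ a b hab (fun x hx => (hmap hx).1) hcaus
    have hBa := (hmap (left_mem_Icc.mpr hab)).2
    have hBb := (hmap (right_mem_Icc.mpr hab)).2
    simp only [mem_setOf_eq] at hBa hBb
    have hd : γ b 0 - γ a 0 < m * ε / 2 := by
      have ha' := abs_lt.mp hBa
      have hb' := abs_lt.mp hBb
      linarith [ha'.1, ha'.2, hb'.1, hb'.2]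
    have hs2 : Real.sqrt 2 < 2 := by
      nlinarith [Real.sq_sqrt (by norm_num : (0:ℝ) ≤ 2), Real.sqrt_nonneg 2]
    have hpos : 0 < Real.sqrt 2 / m := by positivity
    have hs0 : 0 < Real.sqrt 2 := by positivity
    calc clen g γ a b ≤ (Real.sqrt 2 / m) * (γ b 0 - γ a 0) := h1
      _ < (Real.sqrt 2 / m) * (m * ε / 2) := mul_lt_mul_of_pos_left hd hpos
      _ ≤ ε := by
          have he : (Real.sqrt 2 / m) * (m * ε / 2) = Real.sqrt 2 * ε / 2 := by
            field_simp
          rw [he]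
          nlinarith
end
end

section
/- Let g and g_ε be continuous Lorentzian metrics on a set V such that |g(X,X) − g_ε(X,X)| < ε for all h-unit vectors X, where h is a Riemannian metric. If σ is a curve in V, parameterized by h-arc length, that is causal for both g and g_ε and has h-length at most C, then |L_g(σ) − L_{g_ε}(σ)| < C√ε. -/
open MeasureTheory Set Filter

noncomputable section

lemma my_sqrt_add_le (x y : ℝ) (hx : 0 ≤ x) (hy : 0 ≤ y) :
    Real.sqrt (x + y) ≤ Real.sqrt x + Real.sqrt y := by
  rw [show Real.sqrt (x+y) ≤ Real.sqrt x + Real.sqrt y ↔ x + y ≤ (Real.sqrt x + Real.sqrt y)^2 from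
    Real.sqrt_le_left (by positivity)]
  nlinarith [Real.sq_sqrt hx, Real.sq_sqrt hy, Real.sqrt_nonneg x, Real.sqrt_nonneg y]

lemma my_abs_sqrt_sub (a b : ℝ) (ha : 0 ≤ a) (hb : 0 ≤ b) :
    |Real.sqrt a - Real.sqrt b| ≤ Real.sqrt |a - b| := by
  rcases le_total a b with hab | hab
  · rw [abs_sub_comm, abs_of_nonneg (by simpa using Real.sqrt_le_sqrt hab),
      abs_sub_comm, abs_of_nonneg (by linarith)]
    have := my_sqrt_add_le a (b - a) ha (by linarith)
    rw [show a + (b - a) = b by ring] at this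
    linarith
  · rw [abs_of_nonneg (by simpa using Real.sqrt_le_sqrt hab),
      abs_of_nonneg (by linarith)]
    have := my_sqrt_add_le b (a - b) hb (by linarith)
    rw [show b + (a - b) = a by ring] at this
    linarith

/-- if two continuous Lorentzian metrics `g`, `gε` differ by less
than `ε` on `h`-unit vectors, then for any curve `σ` in `V`, parameterized by
`h`-arc length, causal for both metrics and of `h`-length `S ≤ C`, the lengths
satisfy `|L_g(σ) − L_{gε}(σ)| < C√ε`. -/
theorem stmt2 (n : ℕ) (V : Set (Fin n → ℝ))
    (g gε h : (Fin n → ℝ) → Matrix (Fin n) (Fin n) ℝ)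
    (hgc : ContinuousMetricOn g V) (hgεc : ContinuousMetricOn gε V)
    (hLor : IsLorentzOn g V) (hLorε : IsLorentzOn gε V)
    (hhc : ContinuousMetricOn h V)
    (hhpos : ∀ x ∈ V, ∀ v : Fin n → ℝ, v ≠ 0 → 0 < quadForm h x v)
    (ε : ℝ) (hε : 0 < ε)
    (hclose : ∀ x ∈ V, ∀ X : Fin n → ℝ, quadForm h x X = 1 →
      |quadForm g x X - quadForm gε x X| < ε)
    (C : ℝ) (hC : 0 < C)
    (σ : ℝ → Fin n → ℝ) (S : ℝ) (hS0 : 0 ≤ S) (hSC : S ≤ C)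
    (hmaps : MapsTo σ (Icc 0 S) V)
    (hLip : ∃ K, LipschitzOnWith K σ (Icc 0 S))
    -- parameterized by `h`-arc length:
    (harc : ∀ᵐ t : ℝ, t ∈ Ioo 0 S → quadForm h (σ t) (deriv σ t) = 1)
    -- causal for both metrics:
    (hcg : ∀ᵐ t : ℝ, t ∈ Ioo 0 S → quadForm g (σ t) (deriv σ t) ≤ 0)
    (hcgε : ∀ᵐ t : ℝ, t ∈ Ioo 0 S → quadForm gε (σ t) (deriv σ t) ≤ 0) :
    |clen g σ 0 S - clen gε σ 0 S| < C * Real.sqrt ε := by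
  obtain ⟨K, hK⟩ := hLip
  set μ := volume.restrict (Ioc (0:ℝ) S) with hμ
  haveI : IsFiniteMeasure μ := ⟨by
    rw [hμ, Measure.restrict_apply_univ]; exact measure_Ioc_lt_top⟩
  set F : ℝ → ℝ := fun t => Real.sqrt (-(quadForm g (σ t) (deriv σ t))) with hFdef
  set Fε : ℝ → ℝ := fun t => Real.sqrt (-(quadForm gε (σ t) (deriv σ t))) with hFεdef
  have hmono : μ ≤ volume := Measure.restrict_le_self
  have hIoo : ∀ᵐ t ∂μ, t ∈ Ioo 0 S := by
    filter_upwards [ae_restrict_mem measurableSet_Ioc,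
      ((ae_iff.2 (by simpa using (measure_singleton S : volume {S} = 0)) :
        ∀ᵐ t : ℝ ∂volume, ¬ t = S).filter_mono (ae_mono hmono))] with t ht hne
    exact ⟨ht.1, lt_of_le_of_ne ht.2 hne⟩
  have hkey : ∀ᵐ t ∂μ, |F t - Fε t| < Real.sqrt ε := by
    filter_upwards [hIoo, (harc.filter_mono (ae_mono hmono)),
      (hcg.filter_mono (ae_mono hmono)),
      (hcgε.filter_mono (ae_mono hmono))] with t ht h1 h2 h3
    have hxV : σ t ∈ V := hmaps ⟨(ht.1).le, (ht.2).le⟩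
    have hlt : |quadForm g (σ t) (deriv σ t) - quadForm gε (σ t) (deriv σ t)| < ε :=
      hclose _ hxV _ (h1 ht)
    have hg0 := h2 ht
    have hgε0 := h3 ht
    calc |F t - Fε t| ≤ Real.sqrt |(-(quadForm g (σ t) (deriv σ t))) -
          (-(quadForm gε (σ t) (deriv σ t)))| :=
          my_abs_sqrt_sub _ _ (by linarith) (by linarith)
      _ < Real.sqrt ε := by
          apply Real.sqrt_lt_sqrt (abs_nonneg _)
          rw [show (-(quadForm g (σ t) (deriv σ t))) - (-(quadForm gε (σ t) (deriv σ t)))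
            = -((quadForm g (σ t) (deriv σ t)) - (quadForm gε (σ t) (deriv σ t))) by ring,
            abs_neg]
          exact hlt
  have hσc : ContinuousOn σ (Icc 0 S) := hK.continuousOn
  have hcomp : ∀ (G : (Fin n → ℝ) → Matrix (Fin n) (Fin n) ℝ),
      ContinuousMetricOn G V → AEMeasurable (fun t => quadForm G (σ t) (deriv σ t)) μ := by
    intro G hGc
    have hd : Measurable (deriv σ) := measurable_deriv σ
    apply Finset.aemeasurable_fun_sum
    intro i _
    apply Finset.aemeasurable_fun_sum
    intro j _
    have h1 : AEMeasurable (fun t => G (σ t) i j) μ := by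
      have hc : ContinuousOn (fun t => G (σ t) i j) (Icc 0 S) :=
        (hGc i j).comp hσc hmaps
      exact (hc.aemeasurable measurableSet_Icc).mono_measure
        (Measure.restrict_mono Ioc_subset_Icc_self le_rfl)
    exact (h1.mul ((measurable_pi_apply i).comp hd).aemeasurable).mul
      ((measurable_pi_apply j).comp hd).aemeasurable
  have hFm : AEMeasurable F μ :=
    (Real.continuous_sqrt.measurable.comp_aemeasurable (hcomp g hgc).neg)
  have hFεm : AEMeasurable Fε μ :=
    (Real.continuous_sqrt.measurable.comp_aemeasurable (hcomp gε hgεc).neg)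
  have hDint : Integrable (fun t => F t - Fε t) μ :=
    ⟨(hFm.sub hFεm).aestronglyMeasurable,
      HasFiniteIntegral.of_bounded (C := Real.sqrt ε)
        (by filter_upwards [hkey] with t ht; rw [Real.norm_eq_abs]; exact ht.le)⟩
  have hiff : ∀ G : ℝ → ℝ, IntervalIntegrable G volume 0 S ↔ Integrable G μ := by
    intro G; rw [hμ]
    exact intervalIntegrable_iff_integrableOn_Ioc_of_le hS0
  have hRpos : 0 < C * Real.sqrt ε := by positivity
  by_cases hf : Integrable F μ
  · have hfε : Integrable Fε μ := by
      have := hf.sub hDint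
      exact this.congr (Filter.EventuallyEq.of_eq (funext fun t => by
        simp only [Pi.sub_apply]; ring))
    have heq : clen g σ 0 S - clen gε σ 0 S = ∫ t, (F t - Fε t) ∂μ := by
      rw [clen, clen, ← intervalIntegral.integral_sub ((hiff F).2 hf) ((hiff Fε).2 hfε),
        intervalIntegral.integral_of_le hS0]
    rw [heq]
    rcases eq_or_lt_of_le hS0 with hS | hS
    · rw [hμ, ← hS]
      simpa using hRpos
    · have hμuniv : μ univ = ENNReal.ofReal S := by
        rw [hμ, Measure.restrict_apply_univ, Real.volume_Ioc, sub_zero]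
      have habs : Integrable (fun t => |F t - Fε t|) μ := hDint.abs
      have hGint : Integrable (fun t => Real.sqrt ε - |F t - Fε t|) μ :=
        (integrable_const _).sub habs
      have hsupp : ∀ᵐ t ∂μ, t ∈ Function.support fun t => Real.sqrt ε - |F t - Fε t| := by
        filter_upwards [hkey] with t ht
        simp only [Function.mem_support]
        intro h0
        rw [sub_eq_zero] at h0
        exact absurd h0.symm (ne_of_lt ht)
      have hsuppc : μ (Function.support fun t => Real.sqrt ε - |F t - Fε t|)ᶜ = 0 := by
        have h := ae_iff.1 hsupp
        simpa [Set.compl_def] using h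
      have hsupppos : 0 < μ (Function.support fun t => Real.sqrt ε - |F t - Fε t|) := by
        by_contra hcon
        push_neg at hcon
        have h0 : μ (Function.support fun t => Real.sqrt ε - |F t - Fε t|) = 0 :=
          le_antisymm hcon (by simp)
        have : μ univ = 0 := by
          have := measure_union_le (μ := μ)
            (Function.support fun t => Real.sqrt ε - |F t - Fε t|)
            (Function.support fun t => Real.sqrt ε - |F t - Fε t|)ᶜ
          rw [union_compl_self, h0, hsuppc] at this
          simpa using this
        rw [hμuniv] at this
        exact absurd this (by simp [hS, ENNReal.ofReal_eq_zero, not_le])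
      have hGpos : 0 < ∫ t, (Real.sqrt ε - |F t - Fε t|) ∂μ := by
        rw [integral_pos_iff_support_of_nonneg_ae
          (by filter_upwards [hkey] with t ht; simpa using ht.le) hGint]
        exact hsupppos
      rw [integral_sub (integrable_const _) habs, integral_const, measureReal_def, hμuniv,
        ENNReal.toReal_ofReal hS0] at hGpos
      have hint_abs : ∫ t, |F t - Fε t| ∂μ < S * Real.sqrt ε := by
        simp only [smul_eq_mul] at hGpos
        linarith
      calc |∫ t, (F t - Fε t) ∂μ| ≤ ∫ t, |F t - Fε t| ∂μ := by
            simpa [Real.norm_eq_abs] using norm_integral_le_integral_norm (fun t => F t - Fε t) (μ := μ)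
        _ < S * Real.sqrt ε := hint_abs
        _ ≤ C * Real.sqrt ε := mul_le_mul_of_nonneg_right hSC (Real.sqrt_nonneg ε)
  · have hfε : ¬ Integrable Fε μ := by
      intro hfε
      apply hf
      have := hDint.add hfε
      exact this.congr (Filter.EventuallyEq.of_eq (funext fun t => by
        simp only [Pi.add_apply]; ring))
    rw [clen, clen, intervalIntegral.integral_undef (fun hh => hf ((hiff F).1 hh)),
      intervalIntegral.integral_undef (fun hh => hfε ((hiff Fε).1 hh))]
    simpa using hRpos
end
end
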